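/- Let n ≥ 2, and let n_1, n_2 be divisors of n with n_1, n_2 ≥ 2. Suppose c_1, c_2, c_3 are integers with gcd(c_1,n_1) = gcd(c_2,n_2) = gcd(c_3,n) = 1 and (n/n_1)c_1 + (n/n_2)c_2 + c_3 ≡ 0 (mod n). Let s = (n/n_2)·c_3^{-1}·(n_2 - c_2) where c_3^{-1} is the inverse of c_3 mod n. Then the order of the residue class of 2s in Z/2n is n_2, and the order of the residue class of 2s - 2 in Z/2n is n_1. -/

import Mathlib

/-- gcd with `N` is invariant under congruence mod `N`. -/
lemma gcd_invar (N : ℕ) {a b : ℤ} (h : (N : ℤ) ∣ a - b) : Int.gcd N a = Int.gcd N b := by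
  have key : ∀ {x y : ℤ}, (N : ℤ) ∣ x - y → Int.gcd N x ∣ Int.gcd N y := by
    intro x y hxy
    have h1 : (Int.gcd N x : ℤ) ∣ (N : ℤ) := Int.gcd_dvd_left _ _
    have h2 : (Int.gcd N x : ℤ) ∣ x := Int.gcd_dvd_right _ _
    have h3 : (Int.gcd N x : ℤ) ∣ y := by
      have : y = x - (x - y) := by ring
      rw [this]; exact dvd_sub h2 (h1.trans hxy)
    exact_mod_cast Int.dvd_gcd h1 h3
  exact Nat.dvd_antisymm (key h) (key (by simpa using h.neg_right))

/-- gcd with `N` is invariant under multiplication by a unit mod `N`. -/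
lemma gcd_mul_coprime (N : ℕ) (u y : ℤ) (hu : Int.gcd u N = 1) :
    Int.gcd N (u * y) = Int.gcd N y := by
  have : Nat.Coprime u.natAbs N := hu
  rw [Int.gcd, Int.gcd, Int.natAbs_mul, Int.natAbs_natCast]
  exact Nat.Coprime.gcd_mul_left_cancel_right _ this

lemma addOrderOf_intCast (x : ℤ) (N : ℕ) (hN : N ≠ 0) :
    addOrderOf ((x : ZMod N)) = N / Int.gcd N x := by
  have h0 : (0:ℤ) ≤ x % N := Int.emod_nonneg x (by exact_mod_cast hN)
  have hx : ((x : ZMod N)) = (((x % N).toNat : ℕ) : ZMod N) := by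
    rw [← Int.cast_natCast, Int.toNat_of_nonneg h0,
      ZMod.intCast_eq_intCast_iff', Int.emod_emod_of_dvd _ dvd_rfl]
  rw [hx, ZMod.addOrderOf_coe _ hN]
  congr 1
  have h2 : Int.gcd N (x % N) = Int.gcd N x :=
    gcd_invar N ⟨-(x / N), by rw [Int.emod_def]; ring⟩
  rw [← h2]
  unfold Int.gcd
  rw [Int.natAbs_natCast]
  congr 1
  omega


/-- For a Type 1 data set `(n, 0; (c_1,n_1),(c_2,n_2),(c_3,n))` with
`s = (n/n_2)·c_3⁻¹·(n_2 - c_2)`, the order of `2s` in `ℤ/2n` is `n_2` and the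
order of `2s - 2` in `ℤ/2n` is `n_1`. -/
theorem stmt1 (n n1 n2 : ℕ) (c1 c2 c3 c3inv : ℤ) (hn : 2 ≤ n)
    (hn1 : n1 ∣ n) (hn2 : n2 ∣ n) (h1 : 2 ≤ n1) (h2 : 2 ≤ n2)
    (g1 : Int.gcd c1 n1 = 1) (g2 : Int.gcd c2 n2 = 1) (g3 : Int.gcd c3 n = 1)
    (hinv : (n : ℤ) ∣ c3 * c3inv - 1)
    (hsum : (n : ℤ) ∣ ((n / n1 : ℕ) : ℤ) * c1 + ((n / n2 : ℕ) : ℤ) * c2 + c3) :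
    addOrderOf ((2 * (((n / n2 : ℕ) : ℤ) * c3inv * ((n2 : ℤ) - c2)) : ℤ) :
        ZMod (2 * n)) = n2 ∧
    addOrderOf ((2 * (((n / n2 : ℕ) : ℤ) * c3inv * ((n2 : ℤ) - c2)) - 2 : ℤ) :
        ZMod (2 * n)) = n1 := by
  set m1 : ℕ := n / n1 with hm1def
  set m2 : ℕ := n / n2 with hm2def
  have hnN : (2 * n) ≠ 0 := by omega
  have hm1n : m1 * n1 = n := Nat.div_mul_cancel hn1
  have hm2n : m2 * n2 = n := Nat.div_mul_cancel hn2
  have hm1pos : 0 < m1 := by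
    rcases Nat.eq_zero_or_pos m1 with h | h
    · rw [h] at hm1n; simp at hm1n; omega
    · exact h
  have hm2pos : 0 < m2 := by
    rcases Nat.eq_zero_or_pos m2 with h | h
    · rw [h] at hm2n; simp at hm2n; omega
    · exact h
  have hm1z : (m1 : ℤ) * (n1 : ℤ) = (n : ℤ) := by exact_mod_cast hm1n
  have hm2z : (m2 : ℤ) * (n2 : ℤ) = (n : ℤ) := by exact_mod_cast hm2n
  -- c3inv is coprime to n
  obtain ⟨u, hu⟩ := hinv
  have g3inv : Int.gcd c3inv n = 1 := by
    rw [← Int.isCoprime_iff_gcd_eq_one]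
    exact ⟨c3, -u, by linear_combination hu⟩
  have cast2n : ((2 * n : ℕ) : ℤ) = 2 * (n : ℤ) := by push_cast; ring
  constructor
  · rw [addOrderOf_intCast _ _ hnN, cast2n, Int.gcd_mul_left]
    have key : Int.gcd (n : ℤ) ((m2 : ℤ) * c3inv * ((n2 : ℤ) - c2)) = m2 := by
      have e1 : ((m2 : ℤ) * c3inv * ((n2 : ℤ) - c2)) =
          c3inv * ((m2 : ℤ) * ((n2 : ℤ) - c2)) := by ring
      rw [e1, gcd_mul_coprime n c3inv _ g3inv, ← hm2z, Int.gcd_mul_left]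
      have e2 : Int.gcd (n2 : ℤ) ((n2 : ℤ) - c2) = Int.gcd (n2 : ℤ) (-c2) :=
        gcd_invar n2 ⟨1, by ring⟩
      rw [e2]
      have e3 : Int.gcd (n2 : ℤ) (-c2) = 1 := by
        rw [Int.gcd, Int.natAbs_neg, ← Int.gcd, Int.gcd_comm]
        exact g2
      rw [e3]
      simp
    rw [key]
    show 2 * n / (2 * m2) = n2
    rw [← hm2n]
    rw [show 2 * (m2 * n2) = (2 * m2) * n2 by ring]
    exact Nat.mul_div_cancel_left n2 (by omega)
  · have he : (2 * ((m2 : ℤ) * c3inv * ((n2 : ℤ) - c2)) - 2 : ℤ) =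
        2 * ((m2 : ℤ) * c3inv * ((n2 : ℤ) - c2) - 1) := by ring
    rw [he, addOrderOf_intCast _ _ hnN, cast2n, Int.gcd_mul_left]
    obtain ⟨t, ht⟩ := hsum
    have hcong : (n : ℤ) ∣ ((m2 : ℤ) * c3inv * ((n2 : ℤ) - c2) - 1) -
        c3inv * ((m1 : ℤ) * c1) :=
      ⟨c3inv - c3inv * t + u, by linear_combination (-c3inv) * ht + hu + c3inv * hm2z⟩
    have key : Int.gcd (n : ℤ) ((m2 : ℤ) * c3inv * ((n2 : ℤ) - c2) - 1) = m1 := by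
      rw [gcd_invar n hcong, gcd_mul_coprime n c3inv _ g3inv, ← hm1z, Int.gcd_mul_left]
      have e3 : Int.gcd (n1 : ℤ) c1 = 1 := by rw [Int.gcd_comm]; exact g1
      rw [e3]
      simp
    rw [key]
    show 2 * n / (2 * m1) = n1
    rw [← hm1n, show 2 * (m1 * n1) = (2 * m1) * n1 by ring]
    exact Nat.mul_div_cancel_left n1 (by omega)
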